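/- Let n ≥ 2 be an even integer, let p ∈ [0,1]^n, and let z ∈ {0,1}^n be the rounded frequency vector defined by z_i = 1 if p_i ≥ 1/2 and z_i = 0 otherwise. Let x be sampled from the univariate model with frequency vector p, and suppose there exists k > 0 such that the probability that x is an optimum of EqualBlocksOneMax is at least n^{-k}. Then Σ_{i=1}^{n} |p_i − z_i| ≤ 2 · k · ln(n). -/

import Mathlib

/-- The probability that the univariate model with frequency vector `p` samples
exactly the bit string `x` (bits are independent, bit `i` is `true` with
probability `p i`). -/
noncomputable def univMass {n : ℕ} (p : Fin n → ℝ) (x : Fin n → Bool) : ℝ :=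
  ∏ i, if x i then p i else 1 - p i

open scoped Classical in
/-- The probability that a sample from the univariate model with frequency
vector `p` satisfies the predicate `A`. -/
noncomputable def univPr {n : ℕ} (p : Fin n → ℝ) (A : (Fin n → Bool) → Prop) : ℝ :=
  ∑ x : Fin n → Bool, if A x then univMass p x else 0

/-- `x` is an optimum of EqualBlocksOneMax on bit strings of length `2 * m`:
every block (pair of positions `2j` and `2j+1`, zero-based) has two equal bits. -/
def IsEBOMOptimum (m : ℕ) (x : Fin (2 * m) → Bool) : Prop :=
  ∀ j : Fin m,
    x ⟨2 * j.1, by have := j.2; omega⟩ = x ⟨2 * j.1 + 1, by have := j.2; omega⟩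

lemma prod_range_two_mul (f : ℕ → ℝ) (m : ℕ) :
    ∏ i ∈ Finset.range (2 * m), f i = ∏ j ∈ Finset.range m, (f (2 * j) * f (2 * j + 1)) := by
  induction m with
  | zero => simp
  | succ m ih =>
      rw [show 2 * (m + 1) = (2 * m + 1) + 1 by ring, Finset.prod_range_succ,
        Finset.prod_range_succ, Finset.prod_range_succ, ih]
      ring

lemma prod_fin_two_mul (m : ℕ) (F : Fin (2 * m) → ℝ) :
    ∏ i, F i = ∏ j : Fin m,
      (F ⟨2 * j.1, by have := j.2; omega⟩ * F ⟨2 * j.1 + 1, by have := j.2; omega⟩) := by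
  classical
  set q : ℕ → ℝ := fun i => if h : i < 2 * m then F ⟨i, h⟩ else 1 with hq
  have h1 : ∏ i, F i = ∏ i : Fin (2 * m), q i.1 := by
    refine Finset.prod_congr rfl fun i _ => ?_
    simp [hq, i.2]
  rw [h1, Fin.prod_univ_eq_prod_range q (2 * m), prod_range_two_mul,
    ← Fin.prod_univ_eq_prod_range (fun j => q (2 * j) * q (2 * j + 1)) m]
  refine Finset.prod_congr rfl fun j _ => ?_
  have h2 : 2 * j.1 < 2 * m := by have := j.2; omega
  have h3 : 2 * j.1 + 1 < 2 * m := by have := j.2; omega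
  simp [hq, h2, h3]

lemma univPr_ebom (m : ℕ) (p : Fin (2 * m) → ℝ) :
    univPr p (IsEBOMOptimum m) = ∏ j : Fin m,
      (p ⟨2 * j.1, by have := j.2; omega⟩ * p ⟨2 * j.1 + 1, by have := j.2; omega⟩
        + (1 - p ⟨2 * j.1, by have := j.2; omega⟩) *
          (1 - p ⟨2 * j.1 + 1, by have := j.2; omega⟩)) := by
  classical
  set a : Fin m → Fin (2 * m) := fun j => ⟨2 * j.1, by have := j.2; omega⟩ with haa
  set b : Fin m → Fin (2 * m) := fun j => ⟨2 * j.1 + 1, by have := j.2; omega⟩ with hbb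
  set g : Fin m → Bool → ℝ := fun j c =>
    (if c then p (a j) else 1 - p (a j)) * (if c then p (b j) else 1 - p (b j)) with hg
  set E : (Fin m → Bool) → (Fin (2 * m) → Bool) :=
    fun y i => y ⟨i.1 / 2, by have := i.2; omega⟩ with hEdef
  have hEopt : ∀ y, IsEBOMOptimum m (E y) := by
    intro y j
    simp only [hEdef]
    congr 1
    exact Fin.ext (by simp only []; omega)
  have hEinv : ∀ x, IsEBOMOptimum m x → E (fun j => x (a j)) = x := by
    intro x hx
    funext i
    simp only [hEdef, haa]
    rcases Nat.even_or_odd i.1 with he | ho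
    · congr 1; exact Fin.ext (by obtain ⟨c, hc⟩ := he; simp only []; omega)
    · have hj : i.1 / 2 < m := by have := i.2; omega
      have := hx ⟨i.1 / 2, hj⟩
      simp only [] at this
      rw [this]
      congr 1
      exact Fin.ext (by obtain ⟨c, hc⟩ := ho; simp only []; omega)
  have hMass : ∀ y, univMass p (E y) = ∏ j, g j (y j) := by
    intro y
    rw [univMass, prod_fin_two_mul m (fun i => if E y i then p i else 1 - p i)]
    refine Finset.prod_congr rfl fun j _ => ?_
    have ha' : E y ⟨2 * j.1, by have := j.2; omega⟩ = y j := by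
      simp only [hEdef]; congr 1; exact Fin.ext (by simp only []; omega)
    have hb' : E y ⟨2 * j.1 + 1, by have := j.2; omega⟩ = y j := by
      simp only [hEdef]; congr 1; exact Fin.ext (by simp only []; omega)
    rw [ha', hb']
  have hstep : univPr p (IsEBOMOptimum m) = ∑ y : Fin m → Bool, ∏ j, g j (y j) := by
    rw [univPr, ← Finset.sum_filter]
    refine Finset.sum_nbij' (fun x => fun j => x (a j)) E ?_ ?_ ?_ ?_ ?_
    · intro x hx; exact Finset.mem_univ _
    · intro y hy; simp only [Finset.mem_filter, Finset.mem_univ, true_and]; exact hEopt y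
    · intro x hx
      simp only [Finset.mem_filter] at hx
      exact hEinv x hx.2
    · intro y hy
      funext j
      simp only [hEdef, haa]
      congr 1
      exact Fin.ext (by simp only []; omega)
    · intro x hx
      simp only [Finset.mem_filter] at hx
      have h := hMass (fun j => x (a j))
      rw [hEinv x hx.2] at h
      exact h
  rw [hstep]
  have hpi : ∏ j : Fin m, (g j true + g j false) = ∑ y : Fin m → Bool, ∏ j, g j (y j) := by
    have : ∀ j : Fin m, g j true + g j false = ∑ c : Bool, g j c := by
      intro j; rw [Fintype.sum_bool]
    simp_rw [this]
    rw [Finset.prod_univ_sum]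
    rw [Fintype.piFinset_univ]
  rw [← hpi]
  refine Finset.prod_congr rfl fun j _ => ?_
  simp [hg, haa, hbb]

lemma block_bound {p q : ℝ} (hp : p ∈ Set.Icc (0:ℝ) 1) (hq : q ∈ Set.Icc (0:ℝ) 1) :
    p * q + (1 - p) * (1 - q) ≤
      Real.sqrt (max p (1 - p)) * Real.sqrt (max q (1 - q)) := by
  obtain ⟨hp0, hp1⟩ := hp
  obtain ⟨hq0, hq1⟩ := hq
  set B := p * q + (1 - p) * (1 - q) with hB
  have hB0 : 0 ≤ B := by nlinarith
  have h1 : B ≤ max p (1 - p) := by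
    have := mul_le_mul_of_nonneg_right (le_max_left p (1 - p)) hq0
    have := mul_le_mul_of_nonneg_right (le_max_right p (1 - p)) (by linarith : (0:ℝ) ≤ 1 - q)
    nlinarith
  have h2 : B ≤ max q (1 - q) := by
    have := mul_le_mul_of_nonneg_right (le_max_left q (1 - q)) hp0
    have := mul_le_mul_of_nonneg_right (le_max_right q (1 - q)) (by linarith : (0:ℝ) ≤ 1 - p)
    nlinarith
  have hM0 : 0 ≤ max p (1 - p) := le_trans hB0 h1
  have hsq : B ^ 2 ≤ max p (1 - p) * max q (1 - q) := by nlinarith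
  calc B = Real.sqrt (B ^ 2) := (Real.sqrt_sq hB0).symm
    _ ≤ Real.sqrt (max p (1 - p) * max q (1 - q)) := Real.sqrt_le_sqrt hsq
    _ = _ := Real.sqrt_mul hM0 _

lemma sqrt_max_le_exp {p d : ℝ} (hd : max p (1 - p) = 1 - d) :
    Real.sqrt (max p (1 - p)) ≤ Real.exp (-(d / 2)) := by
  rw [hd]
  have h1 : 1 - d ≤ Real.exp (-d) := by
    have := Real.add_one_le_exp (-d); linarith
  calc Real.sqrt (1 - d) ≤ Real.sqrt (Real.exp (-d)) := Real.sqrt_le_sqrt h1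
    _ = Real.exp (-(d / 2)) := by
        rw [show (-d) = (-(d/2)) + (-(d/2)) by ring, Real.exp_add, ← sq,
          Real.sqrt_sq (Real.exp_pos _).le]

theorem l1_dist_le_of_optimum_likely
    (m : ℕ) (hm : 1 ≤ m)
    (p : Fin (2 * m) → ℝ) (hp : ∀ i, p i ∈ Set.Icc (0 : ℝ) 1)
    (z : Fin (2 * m) → Bool) (hz : ∀ i, z i = true ↔ (1 : ℝ) / 2 ≤ p i)
    (k : ℝ) (hk : 0 < k)
    (hE : ((2 * m : ℕ) : ℝ) ^ (-k) ≤ univPr p (IsEBOMOptimum m)) :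
    ∑ i, |p i - if z i then 1 else 0| ≤ 2 * k * Real.log ((2 * m : ℕ) : ℝ) := by
  classical
  set d : Fin (2 * m) → ℝ := fun i => |p i - if z i then 1 else 0| with hd
  have hmax : ∀ i, max (p i) (1 - p i) = 1 - d i := by
    intro i
    obtain ⟨h0, h1⟩ := hp i
    by_cases h : z i = true
    · have h2 : 1 / 2 ≤ p i := (hz i).mp h
      simp only [hd]
      rw [if_pos h, max_eq_left (by linarith), abs_of_nonpos (by linarith)]
      ring
    · have h2 : ¬ (1 / 2 ≤ p i) := fun h' => h ((hz i).mpr h')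
      push_neg at h2
      simp only [hd]
      rw [if_neg h, max_eq_right (by linarith), sub_zero, abs_of_nonneg (by linarith)]
  have hchain : univPr p (IsEBOMOptimum m) ≤ Real.exp (-((∑ i, d i) / 2)) := by
    rw [univPr_ebom]
    calc ∏ j : Fin m,
        (p ⟨2 * j.1, by have := j.2; omega⟩ * p ⟨2 * j.1 + 1, by have := j.2; omega⟩
          + (1 - p ⟨2 * j.1, by have := j.2; omega⟩) *
            (1 - p ⟨2 * j.1 + 1, by have := j.2; omega⟩))
        ≤ ∏ j : Fin m,
          (Real.sqrt (max (p ⟨2 * j.1, by have := j.2; omega⟩)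
              (1 - p ⟨2 * j.1, by have := j.2; omega⟩)) *
           Real.sqrt (max (p ⟨2 * j.1 + 1, by have := j.2; omega⟩)
              (1 - p ⟨2 * j.1 + 1, by have := j.2; omega⟩))) := by
          refine Finset.prod_le_prod (fun j _ => ?_) (fun j _ => block_bound (hp _) (hp _))
          obtain ⟨a0, a1⟩ := hp ⟨2 * j.1, by have := j.2; omega⟩
          obtain ⟨b0, b1⟩ := hp ⟨2 * j.1 + 1, by have := j.2; omega⟩
          nlinarith
      _ = ∏ i, Real.sqrt (max (p i) (1 - p i)) :=
          (prod_fin_two_mul m (fun i => Real.sqrt (max (p i) (1 - p i)))).symm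
      _ ≤ ∏ i, Real.exp (-(d i / 2)) :=
          Finset.prod_le_prod (fun i _ => Real.sqrt_nonneg _)
            (fun i _ => sqrt_max_le_exp (hmax i))
      _ = Real.exp (∑ i, -(d i / 2)) := (Real.exp_sum _ _).symm
      _ = Real.exp (-((∑ i, d i) / 2)) := by
          congr 1
          rw [Finset.sum_neg_distrib, Finset.sum_div]
  have hn2 : (2 : ℝ) ≤ ((2 * m : ℕ) : ℝ) := by
    have : (2 : ℕ) ≤ 2 * m := by omega
    exact_mod_cast this
  have hpos : (0 : ℝ) < ((2 * m : ℕ) : ℝ) ^ (-k) :=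
    Real.rpow_pos_of_pos (by linarith) _
  have hlog : Real.log (((2 * m : ℕ) : ℝ) ^ (-k)) ≤
      Real.log (Real.exp (-((∑ i, d i) / 2))) :=
    Real.log_le_log hpos (le_trans hE hchain)
  rw [Real.log_rpow (by linarith), Real.log_exp] at hlog
  have hlogn : 0 ≤ Real.log ((2 * m : ℕ) : ℝ) := Real.log_nonneg (by linarith)
  linarith
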